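/- Ordered extension: Let G = (V, F) be an S(k-2, k-1, n) Steiner system, and let v_1, …, v_n be an ordering of V with {v_1, …, v_{k-1}} ∈ F. Define F_i = {e ∈ F : e ⊆ {v_1, …, v_i}, v_i ∈ e} and E = ⋃_{i=k-1}^{n-1} {f ∪ {v_j} : f ∈ F_i, j > i}. Then H = (V, E) is a k-uniform 2-hypertree. -/

import Mathlib

variable {V : Type*} [DecidableEq V]

/-- The list of consecutive `k`-windows (as finsets) of a vertex sequence. -/
def windows (k : ℕ) (w : List V) : List (Finset V) :=
  (List.range (w.length + 1 - k)).map fun i => ((w.drop i).take k).toFinset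

/-- `w` is the vertex sequence of a chain: `v₁ ≠ v_l`, each window is a `k`-set,
and the `l - k + 1` window edges are pairwise distinct. -/
def IsChainSeq (k : ℕ) (w : List V) : Prop :=
  k ≤ w.length ∧ w.head? ≠ w.getLast? ∧
  (∀ e ∈ windows k w, e.card = k) ∧ (windows k w).Nodup

/-- `w` is the vertex sequence of a semicycle: `v₁ = v_l`, each window is a `k`-set,
and the `l - k + 1` window edges are pairwise distinct. -/
def IsSemicycleSeq (k : ℕ) (w : List V) : Prop :=
  k ≤ w.length ∧ w.head? = w.getLast? ∧
  (∀ e ∈ windows k w, e.card = k) ∧ (windows k w).Nodup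

/-- A hypergraph with edge set `E` contains no semicycle as a subhypergraph. -/
def SemicycleFree (k : ℕ) (E : Finset (Finset V)) : Prop :=
  ¬ ∃ w : List V, IsSemicycleSeq k w ∧ ∀ e ∈ windows k w, e ∈ E

/-- Every two distinct vertices of `S` lie in a common chain subhypergraph of `E`. -/
def ChainConnOn (k : ℕ) (S : Finset V) (E : Finset (Finset V)) : Prop :=
  ∀ u ∈ S, ∀ v ∈ S, u ≠ v →
    ∃ w : List V, IsChainSeq k w ∧ (∀ e ∈ windows k w, e ∈ E) ∧ u ∈ w ∧ v ∈ w

/-- Chain-connectedness on the whole (finite) vertex type. -/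
def ChainConn [Fintype V] (k : ℕ) (E : Finset (Finset V)) : Prop :=
  ChainConnOn k Finset.univ E

/-- A `k`-uniform hypertree: chain-connected and semicycle-free. -/
def IsHypertree [Fintype V] (k : ℕ) (E : Finset (Finset V)) : Prop :=
  (∀ e ∈ E, e.card = k) ∧ ChainConn k E ∧ SemicycleFree k E

/-- Every chain subhypergraph of `E` has length (number of edges) at most `l`. -/
def ChainsLenLE (k l : ℕ) (E : Finset (Finset V)) : Prop :=
  ∀ w : List V, IsChainSeq k w → (∀ e ∈ windows k w, e ∈ E) →
    w.length + 1 - k ≤ l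

/-- An `l`-hypertree: a hypertree all of whose chains have length at most `l`. -/
def IsLHypertree [Fintype V] (k l : ℕ) (E : Finset (Finset V)) : Prop :=
  IsHypertree k E ∧ ChainsLenLE k l E

/-- Edge-minimal: deleting any edge destroys chain-connectedness. -/
def EdgeMinimal [Fintype V] (k : ℕ) (E : Finset (Finset V)) : Prop :=
  ∀ e ∈ E, ¬ ChainConn k (E.erase e)

/-- Edge-maximal: adding any new `k`-set as an edge creates a semicycle. -/
def EdgeMaximal [Fintype V] (k : ℕ) (E : Finset (Finset V)) : Prop :=
  ∀ s : Finset V, s.card = k → s ∉ E → ¬ SemicycleFree k (insert s E)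

/-- `S` is a (tight) star subhypergraph of `E`: a nonempty set of edges of `E`
all containing a common `(k-1)`-set kernel. -/
def IsStarSub (k : ℕ) (E S : Finset (Finset V)) : Prop :=
  S ⊆ E ∧ S.Nonempty ∧ ∃ K : Finset V, K.card = k - 1 ∧ ∀ e ∈ S, K ⊆ e

/-- `S` is a maximal star subhypergraph of `E`. -/
def IsMaxStar (k : ℕ) (E S : Finset (Finset V)) : Prop :=
  IsStarSub k E S ∧ ∀ T, IsStarSub k E T → S ⊆ T → S = T

lemma nodup_of_toFinset_card_eq {α : Type*} [DecidableEq α] {l : List α}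
    (h : l.toFinset.card = l.length) : l.Nodup := by
  rw [List.card_toFinset] at h
  exact List.dedup_eq_self.mp (l.dedup_sublist.eq_of_length h)

/-- Ordered extension. -/
theorem stmt10 {V : Type*} [Fintype V] [DecidableEq V] (n k : ℕ) (hk : 3 ≤ k)
    (hkn : k ≤ n) (hn : Fintype.card V = n)
    (F : Finset (Finset V)) (hFu : ∀ f ∈ F, f.card = k - 1)
    (hFst : ∀ s : Finset V, s.card = k - 2 → ∃! f, f ∈ F ∧ s ⊆ f)
    (v : Fin n → V) (hv : Function.Bijective v)
    (hfirst : (Finset.univ.filter (fun t : Fin n => (t : ℕ) < k - 1)).image v ∈ F)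
    (E : Finset (Finset V))
    (hE : ∀ e, e ∈ E ↔ ∃ i j : Fin n, i < j ∧ ∃ f ∈ F,
      f ⊆ (Finset.univ.filter (fun t : Fin n => t ≤ i)).image v ∧ v i ∈ f ∧
      e = insert (v j) f) :
    IsLHypertree k 2 E := by
  have hstruct : ∀ e ∈ E, ∃ (j : Fin n) (f : Finset V), f ∈ F ∧
      (∀ x ∈ f, ∃ t : Fin n, t < j ∧ v t = x) ∧ v j ∉ f ∧ e = insert (v j) f := by
    intro e he
    rw [hE] at he
    obtain ⟨i, j, hij, f, hfF, hfsub, hvi, rfl⟩ := he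
    have hall : ∀ x ∈ f, ∃ t : Fin n, t < j ∧ v t = x := by
      intro x hx
      obtain ⟨t, ht, rfl⟩ := Finset.mem_image.mp (hfsub hx)
      exact ⟨t, lt_of_le_of_lt (Finset.mem_filter.mp ht).2 hij, rfl⟩
    refine ⟨j, f, hfF, hall, fun hmem => ?_, rfl⟩
    obtain ⟨t, ht, hvt⟩ := hall _ hmem
    exact absurd (hv.1 hvt) (ne_of_lt ht)
  have hunif : ∀ e ∈ E, e.card = k := by
    intro e he
    obtain ⟨j, f, hfF, -, hj, rfl⟩ := hstruct e he
    rw [Finset.card_insert_of_notMem hj, hFu f hfF]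
    omega
  have key : ∀ A : Finset V, A.card = k - 1 → ∀ e₁ ∈ E, ∀ e₂ ∈ E, e₁ ≠ e₂ →
      A ⊆ e₁ → A ⊆ e₂ → A ∈ F := by
    intro A hA e₁ he₁ e₂ he₂ hne hs₁ hs₂
    obtain ⟨j₁, f₁, hf₁, ht₁, hj₁, rfl⟩ := hstruct e₁ he₁
    obtain ⟨j₂, f₂, hf₂, ht₂, hj₂, rfl⟩ := hstruct e₂ he₂
    by_cases hv1 : v j₁ ∈ A
    · by_cases hv2 : v j₂ ∈ A
      · exfalso
        by_cases hjj : j₁ = j₂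
        · subst hjj
          have hS : (A.erase (v j₁)).card = k - 2 := by
            rw [Finset.card_erase_of_mem hv1, hA]; omega
          obtain ⟨f, -, huniq⟩ := hFst _ hS
          have h1 : A.erase (v j₁) ⊆ f₁ := by
            intro x hx
            rcases Finset.mem_insert.mp (hs₁ (Finset.mem_of_mem_erase hx)) with h | h
            · exact absurd h (Finset.ne_of_mem_erase hx)
            · exact h
          have h2 : A.erase (v j₁) ⊆ f₂ := by
            intro x hx
            rcases Finset.mem_insert.mp (hs₂ (Finset.mem_of_mem_erase hx)) with h | h
            · exact absurd h (Finset.ne_of_mem_erase hx)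
            · exact h
          exact hne (by rw [(huniq f₁ ⟨hf₁, h1⟩).trans (huniq f₂ ⟨hf₂, h2⟩).symm])
        · have m21 : v j₂ ∈ f₁ :=
            (Finset.mem_insert.mp (hs₁ hv2)).resolve_left
              (fun h => hjj (hv.1 h.symm))
          have m12 : v j₁ ∈ f₂ :=
            (Finset.mem_insert.mp (hs₂ hv1)).resolve_left
              (fun h => hjj (hv.1 h))
          obtain ⟨t, htlt, hteq⟩ := ht₁ _ m21
          obtain ⟨s, hslt, hseq⟩ := ht₂ _ m12
          rw [hv.1 hteq] at htlt
          rw [hv.1 hseq] at hslt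
          exact absurd htlt (lt_asymm hslt)
      · have hsub : A ⊆ f₂ := fun x hx =>
          (Finset.mem_insert.mp (hs₂ hx)).resolve_left (by rintro rfl; exact hv2 hx)
        have : A = f₂ := Finset.eq_of_subset_of_card_le hsub (by rw [hFu f₂ hf₂, hA])
        rw [this]; exact hf₂
    · have hsub : A ⊆ f₁ := fun x hx =>
        (Finset.mem_insert.mp (hs₁ hx)).resolve_left (by rintro rfl; exact hv1 hx)
      have : A = f₁ := Finset.eq_of_subset_of_card_le hsub (by rw [hFu f₁ hf₁, hA])
      rw [this]; exact hf₁
  have hshort : ∀ w : List V, (∀ e ∈ windows k w, e.card = k) → (windows k w).Nodup →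
      (∀ e ∈ windows k w, e ∈ E) → w.length + 1 - k ≤ 2 := by
    intro w hcards hnd hmem
    by_contra hlen
    have hwl : k + 2 ≤ w.length := by omega
    obtain ⟨m, hm⟩ : ∃ m, k = m + 2 := ⟨k - 2, by omega⟩
    have h0 : 0 < w.length := by omega
    have h1 : 1 < w.length := by omega
    have hdlen : m + 2 ≤ (w.drop 2).length := by simp; omega
    set d : List V := w.drop 2 with hd
    set x0 := w[0]'h0 with hx0
    set x1 := w[1]'h1 with hx1
    set L : List V := d.take m with hL
    have hym : m < d.length := by omega
    have hym1 : m + 1 < d.length := by omega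
    set y0 := d[m]'hym with hy0
    set y1 := d[m+1]'hym1 with hy1
    have hw2 : w = x0 :: x1 :: d := by
      conv_lhs => rw [← (List.drop_zero : w.drop 0 = w)]
      rw [List.drop_eq_getElem_cons h0, List.drop_eq_getElem_cons h1]
    have hLlen : L.length = m := by simp [hL]; omega
    have heq1 : w.take k = x0 :: x1 :: L := by
      conv_lhs => rw [hw2, hm]
      rfl
    have heq2 : (w.drop 1).take k = x1 :: (L ++ [y0]) := by
      have hd1 : w.drop 1 = x1 :: d := List.drop_eq_getElem_cons h1
      rw [hd1, hm, show m + 2 = (m+1)+1 from rfl, List.take_succ_cons]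
      congr 1
      rw [List.take_succ, List.getElem?_eq_getElem hym]
      rfl
    have heq3 : (w.drop 2).take k = (L ++ [y0]) ++ [y1] := by
      rw [← hd, hm, show m + 2 = (m+1)+1 from rfl, List.take_succ,
        List.take_succ, List.getElem?_eq_getElem hym, List.getElem?_eq_getElem hym1]
      rfl
    have hwin : ∀ i, i < w.length + 1 - k → ((w.drop i).take k).toFinset ∈ windows k w := by
      intro i hi
      exact List.mem_map_of_mem (List.mem_range.mpr hi)
    have hmem0 := hmem _ (hwin 0 (by omega))
    have hmem1 := hmem _ (hwin 1 (by omega))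
    have hmem2 := hmem _ (hwin 2 (by omega))
    have hc0 := hcards _ (hwin 0 (by omega))
    have hc1 := hcards _ (hwin 1 (by omega))
    have hc2 := hcards _ (hwin 2 (by omega))
    rw [List.drop_zero, heq1] at hmem0 hc0
    rw [heq2] at hmem1 hc1
    rw [heq3] at hmem2 hc2
    have hnd' : (List.map (fun i => ((w.drop i).take k).toFinset)
        (List.range (w.length + 1 - k))).Nodup := hnd
    have hinj := List.inj_on_of_nodup_map hnd'
    have hne01 : (x0 :: x1 :: L).toFinset ≠ (x1 :: (L ++ [y0])).toFinset := by
      intro h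
      have h01 := hinj (List.mem_range.mpr (show 0 < w.length + 1 - k by omega))
        (List.mem_range.mpr (show 1 < w.length + 1 - k by omega))
        (by rw [List.drop_zero, heq1, heq2]; exact h)
      omega
    have hne12 : (x1 :: (L ++ [y0])).toFinset ≠ ((L ++ [y0]) ++ [y1]).toFinset := by
      intro h
      have h12 := hinj (List.mem_range.mpr (show 1 < w.length + 1 - k by omega))
        (List.mem_range.mpr (show 2 < w.length + 1 - k by omega))
        (by rw [heq2, heq3]; exact h)
      omega
    have hnd1 : (x1 :: (L ++ [y0])).Nodup := nodup_of_toFinset_card_eq (by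
      rw [hc1]; simp [hLlen]; omega)
    have hx1L : x1 ∉ L := by
      intro h; exact (List.nodup_cons.mp hnd1).1 (List.mem_append_left _ h)
    have hx1y0 : x1 ≠ y0 := by
      intro h; exact (List.nodup_cons.mp hnd1).1 (List.mem_append_right _ (by simp [h]))
    have hndL : L.Nodup := ((List.nodup_append.mp (List.nodup_cons.mp hnd1).2).1)
    have hy0L : y0 ∉ L := by
      have := (List.nodup_append.mp (List.nodup_cons.mp hnd1).2).2.2
      intro h
      exact this _ h _ (by simp) rfl
    have hcardA : (x1 :: L).toFinset.card = k - 1 := by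
      rw [List.toFinset_card_of_nodup (List.nodup_cons.mpr ⟨hx1L, hndL⟩)]
      simp [hLlen]; omega
    have hcardB : ((L ++ [y0]) : List V).toFinset.card = k - 1 := by
      rw [List.toFinset_card_of_nodup (List.nodup_cons.mp hnd1).2]
      simp [hLlen]; omega
    have hsubA1 : (x1 :: L).toFinset ⊆ (x0 :: x1 :: L).toFinset := by
      intro a ha; simp at ha ⊢; tauto
    have hsubA2 : (x1 :: L).toFinset ⊆ (x1 :: (L ++ [y0])).toFinset := by
      intro a ha; simp at ha ⊢; tauto
    have hsubB2 : ((L ++ [y0]) : List V).toFinset ⊆ (x1 :: (L ++ [y0])).toFinset := by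
      intro a ha; simp at ha ⊢; tauto
    have hsubB3 : ((L ++ [y0]) : List V).toFinset ⊆ ((L ++ [y0]) ++ [y1]).toFinset := by
      intro a ha; simp at ha ⊢; tauto
    have hAF := key _ hcardA _ hmem0 _ hmem1 hne01 hsubA1 hsubA2
    have hBF := key _ hcardB _ hmem1 _ hmem2 hne12 hsubB2 hsubB3
    have hcardS : L.toFinset.card = k - 2 := by
      rw [List.toFinset_card_of_nodup hndL, hLlen]; omega
    obtain ⟨f, -, huniq⟩ := hFst _ hcardS
    have hSA : L.toFinset ⊆ (x1 :: L).toFinset := by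
      intro a ha; simp at ha ⊢; tauto
    have hSB : L.toFinset ⊆ ((L ++ [y0]) : List V).toFinset := by
      intro a ha; simp at ha ⊢; tauto
    have hAB := (huniq _ ⟨hAF, hSA⟩).trans (huniq _ ⟨hBF, hSB⟩).symm
    have : x1 ∈ ((L ++ [y0]) : List V).toFinset := hAB ▸ (by simp)
    simp at this
    tauto
  -- the initial edge f0 and single/double edge chains
  set f0 : Finset V := (Finset.univ.filter (fun t : Fin n => (t : ℕ) < k - 1)).image v with hf0
  have hf0card : f0.card = k - 1 := hFu _ hfirst
  have hf0mem : ∀ x, x ∈ f0 ↔ ∃ t : Fin n, (t : ℕ) < k - 1 ∧ v t = x := by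
    intro x; simp [hf0]
  have hedge : ∀ j : Fin n, ¬((j : ℕ) < k - 1) → insert (v j) f0 ∈ E := by
    intro j hj
    rw [hE]
    have hi : k - 2 < n := by omega
    refine ⟨⟨k - 2, hi⟩, j, ?_, f0, hfirst, ?_, ?_, rfl⟩
    · show (k - 2 : ℕ) < (j : ℕ)
      omega
    · intro x hx
      obtain ⟨t, ht, rfl⟩ := (hf0mem x).mp hx
      simp only [Finset.mem_image, Finset.mem_filter, Finset.mem_univ, true_and]
      exact ⟨t, by rw [Fin.le_def]; simp only [Fin.val_mk]; omega, rfl⟩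
    · exact (hf0mem _).mpr ⟨⟨k - 2, hi⟩, by simp; omega, rfl⟩
  have hnotin : ∀ j : Fin n, ¬((j : ℕ) < k - 1) → v j ∉ f0 := by
    intro j hj hmem'
    obtain ⟨t, ht, hte⟩ := (hf0mem _).mp hmem'
    exact hj (hv.1 hte ▸ ht)
  have hf0L : f0.toList.length = k - 1 := by rw [Finset.length_toList, hf0card]
  have hf0ne : f0.toList ≠ [] := by
    intro h; rw [h] at hf0L; simp at hf0L; omega
  have hsingle : ∀ j : Fin n, ¬((j : ℕ) < k - 1) →
      ∃ w : List V, IsChainSeq k w ∧ (∀ e ∈ windows k w, e ∈ E) ∧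
        ∀ x, x ∈ insert (v j) f0 → x ∈ w := by
    intro j hj
    have hwlen : (v j :: f0.toList).length = k := by simp [hf0L]; omega
    have hwcount : (v j :: f0.toList).length + 1 - k = 1 := by omega
    have htf : (v j :: f0.toList).toFinset = insert (v j) f0 := by simp
    have hwindows : windows k (v j :: f0.toList) = [insert (v j) f0] := by
      have h1 : windows k (v j :: f0.toList) =
          [(((v j :: f0.toList).drop 0).take k).toFinset] := by
        unfold windows
        rw [hwcount]
        rfl
      rw [h1, List.drop_zero, List.take_of_length_le (le_of_eq hwlen), htf]
    have hcardE : (insert (v j) f0).card = k := by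
      rw [Finset.card_insert_of_notMem (hnotin j hj), hf0card]; omega
    refine ⟨v j :: f0.toList, ⟨le_of_eq hwlen.symm, ?_, ?_, ?_⟩, ?_, ?_⟩
    · rw [List.getLast?_eq_getLast (List.cons_ne_nil _ _), List.getLast_cons hf0ne]
      intro h
      have h2 : v j = f0.toList.getLast hf0ne := Option.some.inj h
      exact hnotin j hj (Finset.mem_toList.mp (h2 ▸ List.getLast_mem hf0ne))
    · intro e he; rw [hwindows] at he; simp at he; rw [he]; exact hcardE
    · rw [hwindows]; simp
    · intro e he; rw [hwindows] at he; simp at he; rw [he]; exact hedge j hj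
    · intro x hx
      rw [← htf] at hx
      exact List.mem_toFinset.mp hx
  refine ⟨⟨hunif, ?_, ?_⟩, fun w hcs hmemw => hshort w hcs.2.2.1 hcs.2.2.2 hmemw⟩
  · -- ChainConn
    intro u _ u' _ hne'
    obtain ⟨a, rfl⟩ := hv.2 u
    obtain ⟨b, rfl⟩ := hv.2 u'
    by_cases ha : (a : ℕ) < k - 1 <;> by_cases hb : (b : ℕ) < k - 1
    · have hj : ¬(((⟨k - 1, by omega⟩ : Fin n) : ℕ) < k - 1) := by simp
      obtain ⟨w, hcs, hwe, hall⟩ := hsingle _ hj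
      exact ⟨w, hcs, hwe,
        hall _ (Finset.mem_insert_of_mem ((hf0mem _).mpr ⟨a, ha, rfl⟩)),
        hall _ (Finset.mem_insert_of_mem ((hf0mem _).mpr ⟨b, hb, rfl⟩))⟩
    · obtain ⟨w, hcs, hwe, hall⟩ := hsingle b hb
      exact ⟨w, hcs, hwe,
        hall _ (Finset.mem_insert_of_mem ((hf0mem _).mpr ⟨a, ha, rfl⟩)),
        hall _ (Finset.mem_insert_self _ _)⟩
    · obtain ⟨w, hcs, hwe, hall⟩ := hsingle a ha
      exact ⟨w, hcs, hwe,
        hall _ (Finset.mem_insert_self _ _),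
        hall _ (Finset.mem_insert_of_mem ((hf0mem _).mpr ⟨b, hb, rfl⟩))⟩
    · -- both outside f0 : double chain
      have hna := hnotin a ha
      have hnb := hnotin b hb
      have hwlen : (v a :: (f0.toList ++ [v b])).length = k + 1 := by
        simp [hf0L]; omega
      have hcnt : (v a :: (f0.toList ++ [v b])).length + 1 - k = 2 := by omega
      have htake : (v a :: (f0.toList ++ [v b])).take k = v a :: f0.toList := by
        rw [show k = (k - 1) + 1 by omega, List.take_succ_cons, List.take_left' hf0L]
      have hdrop : ((v a :: (f0.toList ++ [v b])).drop 1).take k = f0.toList ++ [v b] := by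
        show (f0.toList ++ [v b]).take k = _
        apply List.take_of_length_le
        simp [hf0L]; omega
      have he2eq : ((f0.toList ++ [v b]) : List V).toFinset = insert (v b) f0 := by
        ext x; simp [or_comm]
      have he1eq : (v a :: f0.toList).toFinset = insert (v a) f0 := by simp
      have hwindows : windows k (v a :: (f0.toList ++ [v b])) =
          [insert (v a) f0, insert (v b) f0] := by
        have h1 : windows k (v a :: (f0.toList ++ [v b])) =
            [(((v a :: (f0.toList ++ [v b])).drop 0).take k).toFinset,
             (((v a :: (f0.toList ++ [v b])).drop 1).take k).toFinset] := by
          unfold windows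
          rw [hcnt]
          rfl
        rw [h1, List.drop_zero, htake, hdrop, he1eq, he2eq]
      have hcard1 : (insert (v a) f0).card = k := by
        rw [Finset.card_insert_of_notMem hna, hf0card]; omega
      have hcard2 : (insert (v b) f0).card = k := by
        rw [Finset.card_insert_of_notMem hnb, hf0card]; omega
      refine ⟨v a :: (f0.toList ++ [v b]), ⟨by rw [hwlen]; omega, ?_, ?_, ?_⟩, ?_, ?_, ?_⟩
      · have hgl : (v a :: (f0.toList ++ [v b])).getLast? = some (v b) := by
          rw [show (v a :: (f0.toList ++ [v b])) = (v a :: f0.toList) ++ [v b] from rfl,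
            List.getLast?_concat]
        rw [hgl]
        simp only [List.head?_cons]
        intro h
        exact hne' (Option.some.inj h)
      · intro e he
        rw [hwindows] at he
        simp at he
        rcases he with rfl | rfl
        · exact hcard1
        · exact hcard2
      · rw [hwindows]
        simp only [List.nodup_cons, List.mem_singleton, List.not_mem_nil,
          not_false_iff, List.nodup_nil, and_true]
        intro h
        have hmem' : v a ∈ insert (v b) f0 := h ▸ Finset.mem_insert_self _ _
        rcases Finset.mem_insert.mp hmem' with h' | h'
        · exact hne' h'
        · exact hna h'
      · intro e he
        rw [hwindows] at he
        simp at he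
        rcases he with rfl | rfl
        · exact hedge a ha
        · exact hedge b hb
      · exact List.mem_cons_self
      · simp
  · -- SemicycleFree
    rintro ⟨w, ⟨hkw, hhl, hcards, hnd⟩, hmemw⟩
    have hle := hshort w hcards hnd hmemw
    rcases (by omega : w.length = k ∨ w.length = k + 1) with hcase | hcase
    · have h1cnt : w.length + 1 - k = 1 := by omega
      have hw0 : windows k w = [w.toFinset] := by
        have h1 : windows k w = [((w.drop 0).take k).toFinset] := by
          unfold windows; rw [h1cnt]; rfl
        rw [h1, List.drop_zero, List.take_of_length_le (le_of_eq hcase)]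
      have hcardw : w.toFinset.card = k := hcards _ (by rw [hw0]; simp)
      have hndw : w.Nodup := nodup_of_toFinset_card_eq (by rw [hcardw, hcase])
      have h0 : 0 < w.length := by omega
      have hlast : w.length - 1 < w.length := by omega
      rw [List.head?_eq_getElem?, List.getLast?_eq_getElem?,
        List.getElem?_eq_getElem h0, List.getElem?_eq_getElem hlast] at hhl
      have h01 := (hndw.getElem_inj_iff).mp (Option.some.inj hhl)
      omega
    · have h2cnt : w.length + 1 - k = 2 := by omega
      have h0 : 0 < w.length := by omega
      have hkl : k < w.length := by omega
      have hwindows2 : windows k w = [(w.take k).toFinset, ((w.drop 1).take k).toFinset] := by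
        have h1 : windows k w = [((w.drop 0).take k).toFinset,
            ((w.drop 1).take k).toFinset] := by
          unfold windows; rw [h2cnt]; rfl
        rw [h1, List.drop_zero]
      have hc1 : (w.take k).toFinset.card = k := hcards _ (by rw [hwindows2]; simp)
      have hc2 : ((w.drop 1).take k).toFinset.card = k := hcards _ (by rw [hwindows2]; simp)
      have hne12 : (w.take k).toFinset ≠ ((w.drop 1).take k).toFinset := by
        rw [hwindows2] at hnd
        simpa using (List.nodup_cons.mp hnd).1
      rw [List.head?_eq_getElem?, List.getLast?_eq_getElem?,
        List.getElem?_eq_getElem h0,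
        List.getElem?_eq_getElem (show w.length - 1 < w.length by omega)] at hhl
      have h0k := Option.some.inj hhl
      have hidx : w.length - 1 = k := by omega
      simp only [hidx] at h0k
      have hwk : w.drop k = [w[k]'hkl] := by
        rw [List.drop_eq_getElem_cons hkl, List.drop_eq_nil_of_le (by omega)]
      have hsplit : w = w.take k ++ [w[k]'hkl] := by
        conv_lhs => rw [← List.take_append_drop k w]
        rw [hwk]
      have hlt : 0 < (w.take k).length := by
        rw [List.length_take]; omega
      have hmem0 : w[0]'h0 ∈ w.take k := by
        have hget : (w.take k)[0]'hlt = w[0]'h0 := List.getElem_take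
        rw [← hget]; exact List.getElem_mem ..
      have hTsub : w.toFinset ⊆ (w.take k).toFinset := by
        intro x hx
        rw [List.mem_toFinset] at hx
        rw [List.mem_toFinset]
        rw [hsplit] at hx
        rcases List.mem_append.mp hx with h | h
        · exact h
        · simp at h
          rw [h, ← h0k]
          exact hmem0
      have hsub1 : (w.take k).toFinset ⊆ w.toFinset := by
        intro x hx; rw [List.mem_toFinset] at hx ⊢; exact List.mem_of_mem_take hx
      have hsub2 : ((w.drop 1).take k).toFinset ⊆ w.toFinset := by
        intro x hx; rw [List.mem_toFinset] at hx ⊢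
        exact List.mem_of_mem_drop (List.mem_of_mem_take hx)
      have hTcard : w.toFinset.card ≤ k := by
        calc w.toFinset.card ≤ (w.take k).toFinset.card := Finset.card_le_card hTsub
        _ = k := hc1
      have he1T : (w.take k).toFinset = w.toFinset :=
        Finset.eq_of_subset_of_card_le hsub1 (by rw [hc1]; exact hTcard)
      have he2T : ((w.drop 1).take k).toFinset = w.toFinset :=
        Finset.eq_of_subset_of_card_le hsub2 (by rw [hc2]; exact hTcard)
      exact hne12 (he1T.trans he2T.symm)
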